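/- For each set ι of pairwise compatible proper subintervals of [1,n-1], the intersection of K_n with the hyperplanes P_I = {Σ_{k∈I} t_k = 3^{#I}} for I ∈ ι is a nonempty face of K_n of dimension n - #ι - 2, and every face of K_n arises this way; consequently the face poset of K_n is isomorphic to I(n). -/

import Mathlib

open Finset

/-- The Shnider–Sternberg convex realization of the associahedron `K_n` in `ℝ^{n-1}`. -/
def KnPoly (n : ℕ) : Set (Fin (n - 1) → ℝ) :=
  {t | (∑ k, t k) = 3 ^ (n - 1) ∧
    ∀ i j : Fin (n - 1), i ≤ j → ¬((i : ℕ) = 0 ∧ (j : ℕ) = n - 2) →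
      (3 : ℝ) ^ (Finset.Icc i j).card ≤ ∑ k ∈ Finset.Icc i j, t k}

/-- The pair `(p.1, p.2)` encodes a proper subinterval `[p.1, p.2]` of `[1, n-1]`
(in `Fin (n-1)` coordinates). -/
def ProperInt (n : ℕ) (p : Fin (n - 1) × Fin (n - 1)) : Prop :=
  p.1 ≤ p.2 ∧ ¬((p.1 : ℕ) = 0 ∧ (p.2 : ℕ) = n - 2)

/-- Two intervals are compatible: one contains the other, or their union is not an
interval (they are disjoint and non-adjacent). -/
def CompatInt (n : ℕ) (p q : Fin (n - 1) × Fin (n - 1)) : Prop :=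
  (p.1 ≤ q.1 ∧ q.2 ≤ p.2) ∨ (q.1 ≤ p.1 ∧ p.2 ≤ q.2) ∨
    (p.2 : ℕ) + 1 < (q.1 : ℕ) ∨ (q.2 : ℕ) + 1 < (p.1 : ℕ)

/-- The subset of `K_n` cut out by the hyperplanes `P_I`, `I ∈ ι`. -/
def KnFace (n : ℕ) (ι : Finset (Fin (n - 1) × Fin (n - 1))) : Set (Fin (n - 1) → ℝ) :=
  {t | t ∈ KnPoly n ∧ ∀ p ∈ ι,
    (∑ k ∈ Finset.Icc p.1 p.2, t k) = 3 ^ (Finset.Icc p.1 p.2).card}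

noncomputable section
namespace KnAux
open scoped Classical

def len (p : ℕ × ℕ) : ℕ := p.2 + 1 - p.1
def Sub (q p : ℕ × ℕ) : Prop := p.1 ≤ q.1 ∧ q.2 ≤ p.2
def Memi (k : ℕ) (p : ℕ × ℕ) : Prop := p.1 ≤ k ∧ k ≤ p.2

def Free (T : Finset (ℕ × ℕ)) (p : ℕ × ℕ) (k : ℕ) : Prop :=
  Memi k p ∧ ∀ q ∈ T, q ≠ p → Sub q p → ¬ Memi k q

def freeSet (T : Finset (ℕ × ℕ)) (p : ℕ × ℕ) : Finset ℕ :=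
  (Icc p.1 p.2).filter (Free T p)

def children (T : Finset (ℕ × ℕ)) (p : ℕ × ℕ) : Finset (ℕ × ℕ) :=
  T.filter (fun C => C ≠ p ∧ Sub C p ∧ ∀ C' ∈ T, C' ≠ p → Sub C' p → Sub C C' → C' = C)

def exc (T : Finset (ℕ × ℕ)) (p : ℕ × ℕ) : ℝ :=
  3 ^ len p - ∑ C ∈ children T p, (3:ℝ) ^ len C

def pt (T : Finset (ℕ × ℕ)) (k : ℕ) : ℝ :=
  ∑ p ∈ T.filter (fun p => Free T p k), exc T p / (freeSet T p).card

structure IsLam (M : ℕ) (T : Finset (ℕ × ℕ)) : Prop where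
  mem : ∀ p ∈ T, p.1 ≤ p.2 ∧ p.2 ≤ M
  root : (0, M) ∈ T
  lam : ∀ p ∈ T, ∀ q ∈ T, Sub p q ∨ Sub q p ∨ p.2 + 1 < q.1 ∨ q.2 + 1 < p.1

variable {M : ℕ} {T : Finset (ℕ × ℕ)}

lemma nested_of_overlap (hL : IsLam M T) {p q : ℕ × ℕ} (hp : p ∈ T) (hq : q ∈ T)
    (h1 : q.1 ≤ p.2) (h2 : p.1 ≤ q.2) : Sub p q ∨ Sub q p := by
  rcases hL.lam p hp q hq with h | h | h | h
  · exact Or.inl h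
  · exact Or.inr h
  · omega
  · omega

lemma free_unique (hL : IsLam M T) {p q : ℕ × ℕ} {k : ℕ} (hp : p ∈ T) (hq : q ∈ T)
    (h1 : Free T p k) (h2 : Free T q k) : p = q := by
  by_contra hne
  obtain ⟨⟨a1, a2⟩, _⟩ := id h1
  obtain ⟨⟨b1, b2⟩, _⟩ := id h2
  rcases nested_of_overlap hL hp hq (by omega) (by omega) with h | h
  · exact h2.2 p hp hne h h1.1
  · exact h1.2 q hq (Ne.symm hne) h h2.1

lemma exists_free (hL : IsLam M T) {p : ℕ × ℕ} {a b : ℕ} (hp : p ∈ T) (hab : a ≤ b)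
    (hsub : Sub (a, b) p) (hmax : ∀ C ∈ T, C ≠ p → Sub C p → ¬ Sub (a, b) C) :
    ∃ k, a ≤ k ∧ k ≤ b ∧ Free T p k := by
  classical
  set Ca := T.filter (fun C => C ≠ p ∧ Sub C p ∧ Memi a C) with hCadef
  by_cases hCa : Ca.Nonempty
  · obtain ⟨C, hC, hCmax⟩ := Ca.exists_max_image (fun C => C.2) hCa
    rw [hCadef, mem_filter] at hC
    obtain ⟨hCT, hCne, hCsub, hCmem⟩ := hC
    obtain ⟨hm1, hm2⟩ := hCmem
    obtain ⟨hs1, hs2⟩ := hCsub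
    have hb : C.2 < b := by
      by_contra h
      exact hmax C hCT hCne ⟨hs1, hs2⟩ ⟨hm1, by omega⟩
    have hsub1 : p.1 ≤ a := hsub.1
    have hsub2 : b ≤ p.2 := hsub.2
    refine ⟨C.2 + 1, by omega, by omega, ⟨⟨by omega, by omega⟩, ?_⟩⟩
    intro C' hC' hne' hsub' hmem'
    rcases hL.lam C' hC' C hCT with h | h | h | h
    · obtain ⟨x1, x2⟩ := h; obtain ⟨y1, y2⟩ := hmem'; omega
    · obtain ⟨x1, x2⟩ := h
      have hC'Ca : C' ∈ Ca := by
        rw [hCadef, mem_filter]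
        exact ⟨hC', hne', hsub', ⟨by omega, by omega⟩⟩
      have := hCmax C' hC'Ca
      obtain ⟨y1, y2⟩ := hmem'; omega
    · obtain ⟨y1, y2⟩ := hmem'; omega
    · obtain ⟨y1, y2⟩ := hmem'; omega
  · refine ⟨a, le_refl a, hab, ⟨⟨hsub.1, le_trans hab hsub.2⟩, ?_⟩⟩
    intro C hC hne hsubC hmemC
    exact hCa ⟨C, by rw [hCadef, mem_filter]; exact ⟨hC, hne, hsubC, hmemC⟩⟩

lemma freeSet_nonempty (hL : IsLam M T) {p : ℕ × ℕ} (hp : p ∈ T) :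
    (freeSet T p).Nonempty := by
  obtain ⟨h1, _⟩ := hL.mem p hp
  obtain ⟨k, hk1, hk2, hk3⟩ := exists_free hL hp h1 ⟨le_refl _, le_refl _⟩
    (fun C hC hne hsub hsub' => hne (by
      have := hsub.1; have := hsub.2; have := hsub'.1; have := hsub'.2
      exact Prod.ext (by omega) (by omega)))
  exact ⟨k, mem_filter.2 ⟨mem_Icc.2 ⟨hk1, hk2⟩, hk3⟩⟩

lemma exists_child (hL : IsLam M T) {p : ℕ × ℕ} {k : ℕ} (hp : p ∈ T) (hk : Memi k p)
    (hnf : ¬ Free T p k) : ∃ C ∈ children T p, Memi k C := by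
  classical
  have hex : ∃ C0 ∈ T, C0 ≠ p ∧ Sub C0 p ∧ Memi k C0 := by
    unfold Free at hnf
    push_neg at hnf
    obtain ⟨C0, h1, h2, h3, h4⟩ := hnf hk
    exact ⟨C0, h1, h2, h3, h4⟩
  set S := T.filter (fun C => C ≠ p ∧ Sub C p ∧ Memi k C) with hSdef
  have hSne : S.Nonempty := by
    obtain ⟨C0, h1, h2, h3, h4⟩ := hex
    exact ⟨C0, by rw [hSdef, mem_filter]; exact ⟨h1, h2, h3, h4⟩⟩
  obtain ⟨C, hC, hCmax⟩ := S.exists_max_image len hSne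
  rw [hSdef, mem_filter] at hC
  obtain ⟨hCT, hCne, hCsub, hCmem⟩ := hC
  refine ⟨C, mem_filter.2 ⟨hCT, hCne, hCsub, ?_⟩, hCmem⟩
  intro C' hC' hne' hsub' hsubCC'
  have hC'S : C' ∈ S := by
    rw [hSdef, mem_filter]
    refine ⟨hC', hne', hsub', ⟨?_, ?_⟩⟩
    · have := hsubCC'.1; have := hCmem.1; omega
    · have := hsubCC'.2; have := hCmem.2; omega
  have hlen := hCmax C' hC'S
  have h1 := (hL.mem C hCT).1
  have h2 := (hL.mem C' hC').1
  unfold len at hlen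
  have := hsubCC'.1; have := hsubCC'.2
  exact Prod.ext (by omega) (by omega)

lemma children_far (hL : IsLam M T) {p C D : ℕ × ℕ} (hC : C ∈ children T p)
    (hD : D ∈ children T p) (hne : C ≠ D) : C.2 + 1 < D.1 ∨ D.2 + 1 < C.1 := by
  rw [children, mem_filter] at hC hD
  obtain ⟨hCT, hCne, hCsub, hCmax⟩ := hC
  obtain ⟨hDT, hDne, hDsub, hDmax⟩ := hD
  rcases hL.lam C hCT D hDT with h | h | h | h
  · exact absurd (hCmax D hDT hDne hDsub h).symm hne
  · exact absurd (hDmax C hCT hCne hCsub h) hne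
  · exact Or.inl h
  · exact Or.inr h


lemma sum_decomp {β : Type*} [AddCommMonoid β] (hL : IsLam M T) (g : ℕ → β)
    {p : ℕ × ℕ} {a b : ℕ} (hp : p ∈ T) (hab : a ≤ b) (hsub : Sub (a, b) p) :
    ∑ k ∈ Icc a b, g k = (∑ k ∈ (Icc a b).filter (Free T p), g k)
      + ∑ C ∈ (children T p).filter (fun C => C.1 ≤ b ∧ a ≤ C.2),
          ∑ k ∈ Icc (max a C.1) (min b C.2), g k := by
  classical
  rw [← Finset.sum_filter_add_sum_filter_not (Icc a b) (Free T p) g]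
  congr 1
  rw [← Finset.sum_biUnion ?hdisj]
  case hdisj =>
    intro C hC D hD hne
    simp only [coe_filter, Set.mem_setOf_eq] at hC hD
    have hfar := children_far hL hC.1 hD.1 hne
    simp only [Finset.disjoint_left, mem_Icc]
    intro k hk1 hk2
    omega
  · congr 1
    ext k
    simp only [mem_filter, mem_Icc, mem_biUnion]
    constructor
    · rintro ⟨⟨hk1, hk2⟩, hnf⟩
      have hkp : Memi k p := ⟨le_trans hsub.1 hk1, le_trans hk2 hsub.2⟩
      obtain ⟨C, hC, hmemk⟩ := exists_child hL hp hkp hnf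
      obtain ⟨hm1, hm2⟩ := hmemk
      exact ⟨C, ⟨hC, by omega, by omega⟩, by omega, by omega⟩
    · rintro ⟨C, ⟨hCch, hCb, hCa⟩, hk1, hk2⟩
      rw [children, mem_filter] at hCch
      obtain ⟨hCT, hCne, hCsub, _⟩ := hCch
      refine ⟨⟨by omega, by omega⟩, fun hf => ?_⟩
      exact hf.2 C hCT hCne hCsub ⟨by omega, by omega⟩

lemma card_decomp (hL : IsLam M T) {p : ℕ × ℕ} {a b : ℕ} (hp : p ∈ T) (hab : a ≤ b)
    (hsub : Sub (a, b) p) :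
    b + 1 - a = ((Icc a b).filter (Free T p)).card
      + ∑ C ∈ (children T p).filter (fun C => C.1 ≤ b ∧ a ≤ C.2),
          (min b C.2 + 1 - max a C.1) := by
  have h := sum_decomp hL (fun _ => (1 : ℕ)) hp hab hsub
  simp only [Finset.sum_const, smul_eq_mul, mul_one, Nat.card_Icc] at h
  exact h

lemma exists_min_member (hL : IsLam M T) {a b : ℕ} (hab : a ≤ b) (hbM : b ≤ M) :
    ∃ p ∈ T, Sub (a, b) p ∧ ∀ q ∈ T, Sub (a, b) q → Sub p q := by
  classical
  set S := T.filter (fun p => Sub (a, b) p) with hSdef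
  have hSne : S.Nonempty := ⟨(0, M), by
    rw [hSdef, mem_filter]; exact ⟨hL.root, ⟨Nat.zero_le a, hbM⟩⟩⟩
  obtain ⟨p, hp, hmin⟩ := S.exists_min_image len hSne
  rw [hSdef, mem_filter] at hp
  refine ⟨p, hp.1, hp.2, ?_⟩
  intro q hq hsubq
  have h1 : q.1 ≤ p.2 := le_trans hsubq.1 (le_trans hab hp.2.2)
  have h2 : p.1 ≤ q.2 := le_trans hp.2.1 (le_trans hab hsubq.2)
  rcases nested_of_overlap hL hp.1 hq h1 h2 with h | h
  · exact h
  · have hlen := hmin q (by rw [hSdef, mem_filter]; exact ⟨hq, hsubq⟩)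
    have hq1 := (hL.mem q hq).1
    have hp1 := (hL.mem p hp.1).1
    unfold len at hlen
    obtain ⟨x1, x2⟩ := h
    have : p = q := Prod.ext (by omega) (by omega)
    subst this; exact ⟨le_refl _, le_refl _⟩

lemma pt_free (hL : IsLam M T) {p : ℕ × ℕ} {k : ℕ} (hp : p ∈ T) (hf : Free T p k) :
    pt T k = exc T p / (freeSet T p).card := by
  classical
  rw [pt]
  rw [show T.filter (fun q => Free T q k) = {p} from ?_, Finset.sum_singleton]
  ext q
  simp only [mem_filter, Finset.mem_singleton]
  constructor
  · rintro ⟨hq, hfq⟩; exact free_unique hL hq hp hfq hf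
  · rintro rfl; exact ⟨hp, hf⟩

lemma nat_pow3 (g : ℕ) : 2 * g + 1 ≤ 3 ^ g := by
  induction g with
  | zero => simp
  | succ n ih => rw [pow_succ]; omega

lemma nat_pow3' (g : ℕ) : g + 1 ≤ 3 ^ g := le_trans (by omega) (nat_pow3 g)

lemma real_sum_pow3 {α : Type*} {S : Finset α} (g : α → ℕ) (hS : S.Nonempty)
    (hg : ∀ x ∈ S, 1 ≤ g x) : ∑ x ∈ S, (3:ℝ) ^ g x ≤ 3 ^ (∑ x ∈ S, g x) := by
  classical
  induction hS using Finset.Nonempty.cons_induction with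
  | singleton a => simp
  | cons a S ha hS ih =>
    rw [Finset.sum_cons, Finset.sum_cons, pow_add]
    have h1 : (3:ℝ) ^ g a ≥ 3 := by
      calc (3:ℝ) = 3 ^ 1 := (pow_one 3).symm
        _ ≤ 3 ^ g a := by
            apply pow_le_pow_right₀ (by norm_num)
            exact hg a (Finset.mem_cons_self a S)
    have h2 : ∑ x ∈ S, (3:ℝ) ^ g x ≤ 3 ^ (∑ x ∈ S, g x) :=
      ih (fun x hx => hg x (Finset.mem_cons_of_mem hx))
    have h3 : (3:ℝ) ^ (∑ x ∈ S, g x) ≥ 3 := by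
      calc (3:ℝ) = 3 ^ 1 := (pow_one 3).symm
        _ ≤ _ := by
            apply pow_le_pow_right₀ (by norm_num)
            obtain ⟨x, hx⟩ := hS
            calc 1 ≤ g x := hg x (Finset.mem_cons_of_mem hx)
              _ ≤ _ := Finset.single_le_sum (f := g) (fun i _ => Nat.zero_le _) hx
    nlinarith [h1, h2, h3]


lemma children_spec {p C : ℕ × ℕ} (hC : C ∈ children T p) :
    C ∈ T ∧ C ≠ p ∧ Sub C p := by
  rw [children, mem_filter] at hC
  exact ⟨hC.1, hC.2.1, hC.2.2.1⟩

lemma child_len_lt (hL : IsLam M T) {p C : ℕ × ℕ} (hp : p ∈ T) (hC : C ∈ children T p) :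
    len C < len p := by
  obtain ⟨hCT, hne, hsub⟩ := children_spec hC
  have h1 := (hL.mem C hCT).1
  have h2 := (hL.mem p hp).1
  obtain ⟨s1, s2⟩ := hsub
  have h3 : C.1 ≠ p.1 ∨ C.2 ≠ p.2 := by
    by_contra h; push_neg at h; exact hne (Prod.ext h.1 h.2)
  unfold len; omega

lemma self_min (hL : IsLam M T) {C : ℕ × ℕ} (hC : C ∈ T) :
    ∀ q ∈ T, Sub (C.1, C.2) q → Sub C q := by
  intro q hq hsub
  have h1 := (hL.mem C hC).1
  rcases nested_of_overlap hL hC hq (le_trans hsub.1 h1) (le_trans h1 hsub.2) with h | h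
  · exact h
  · obtain ⟨x1, x2⟩ := h; obtain ⟨y1, y2⟩ := hsub
    have he : C = q := Prod.ext (by omega) (by omega)
    subst he; exact ⟨le_refl _, le_refl _⟩

lemma sum_decomp_self {β : Type*} [AddCommMonoid β] (hL : IsLam M T) (g : ℕ → β)
    {p : ℕ × ℕ} (hp : p ∈ T) :
    ∑ k ∈ Icc p.1 p.2, g k = (∑ k ∈ freeSet T p, g k)
      + ∑ C ∈ children T p, ∑ k ∈ Icc C.1 C.2, g k := by
  have h := sum_decomp hL g hp (hL.mem p hp).1 ⟨le_refl _, le_refl _⟩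
  rw [h]
  congr 1
  rw [show (children T p).filter (fun C => C.1 ≤ p.2 ∧ p.1 ≤ C.2) = children T p from
    Finset.filter_true_of_mem (fun C hC => by
      obtain ⟨hCT, hne, hsub⟩ := children_spec hC
      obtain ⟨u1, u2⟩ := hsub
      have h1 := (hL.mem C hCT).1
      exact ⟨by omega, by omega⟩)]
  apply Finset.sum_congr rfl
  intro C hC
  obtain ⟨hCT, hne, hsub⟩ := children_spec hC
  rw [max_eq_right hsub.1, min_eq_right hsub.2]

lemma len_decomp_self (hL : IsLam M T) {p : ℕ × ℕ} (hp : p ∈ T) :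
    len p = (freeSet T p).card + ∑ C ∈ children T p, len C := by
  have h := sum_decomp_self hL (fun _ => (1 : ℕ)) hp
  simp only [Finset.sum_const, smul_eq_mul, mul_one, Nat.card_Icc] at h
  exact h

lemma realmain2 (f L : ℕ) (hf : 1 ≤ f) (hfL : f < L) : (L:ℝ) * 3^f < f * 3^L := by
  have hLfg : L = f + (L - f) := by omega
  set g := L - f with hg
  have hg1 : 1 ≤ g := by omega
  have h1' : (2*(g:ℝ)+1) ≤ 3^g := by exact_mod_cast nat_pow3 g
  have hf' : (1:ℝ) ≤ f := by exact_mod_cast hf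
  have hg' : (1:ℝ) ≤ g := by exact_mod_cast hg1
  have hLf : (L:ℝ) = f + g := by exact_mod_cast hLfg
  have hx : (0:ℝ) < 3^f := by positivity
  have hfy : (L:ℝ) + 1 ≤ f * 3^g := by
    have h2 : (f:ℝ) * (2*g+1) ≤ f * 3^g :=
      mul_le_mul_of_nonneg_left h1' (by positivity)
    nlinarith [mul_nonneg (sub_nonneg.2 hf') (sub_nonneg.2 hg')]
  calc (L:ℝ) * 3^f < (f * 3^g) * 3^f := by nlinarith
    _ = f * 3^L := by rw [hLfg, pow_add]; ring

lemma pow3_ge_three {f : ℕ} (hf : 1 ≤ f) : (3:ℝ) ≤ 3^f := by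
  calc (3:ℝ) = 3^1 := (pow_one 3).symm
    _ ≤ 3^f := pow_le_pow_right₀ (by norm_num) hf

lemma realmain (f s : ℕ) (hf : 1 ≤ f) (hfs : f ≤ s) : (s:ℝ) * 3^f + 3*f < 3*f*3^s := by
  have hf' : (1:ℝ) ≤ f := by exact_mod_cast hf
  have h3f : (3:ℝ) ≤ 3^f := pow3_ge_three hf
  rcases eq_or_lt_of_le hfs with rfl | hlt
  · nlinarith [mul_le_mul_of_nonneg_left h3f (le_trans zero_le_one hf')]
  · have hg1 : 1 ≤ s - f := by omega
    have hsfg : s = f + (s - f) := by omega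
    set g := s - f with hg
    have hg' : (1:ℝ) ≤ g := by exact_mod_cast hg1
    have hs' : (s:ℝ) = f + g := by exact_mod_cast hsfg
    have hy : ((g:ℝ)+1) ≤ 3^g := by exact_mod_cast nat_pow3' g
    have hx : (0:ℝ) < 3^f := by positivity
    -- 3f·3^g ≥ s + 3f + 1
    have hfy : (s:ℝ) + 3*f + 1 ≤ 3*f*3^g := by
      have h2 : (3*(f:ℝ)) * (g+1) ≤ 3*f * 3^g :=
        mul_le_mul_of_nonneg_left hy (by positivity)
      nlinarith [mul_nonneg (sub_nonneg.2 hf') (sub_nonneg.2 hg')]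
    have h4 : (3*(f:ℝ)*3^g) * 3^f ≤ 3*f*3^s := by
      rw [hsfg, pow_add]; ring_nf; nlinarith [hx]
    nlinarith [mul_le_mul_of_nonneg_right hfy (le_of_lt hx)]

theorem key (hL : IsLam M T) : ∀ d : ℕ, ∀ p : ℕ × ℕ, p ∈ T → len p ≤ d →
    ∀ a b : ℕ, a ≤ b → Sub (a, b) p → (∀ q ∈ T, Sub (a, b) q → Sub p q) →
    (((a, b) ∈ T → ∑ k ∈ Icc a b, pt T k = 3 ^ (b + 1 - a)) ∧
     ((a, b) ∉ T → (3:ℝ) ^ (b + 1 - a) < ∑ k ∈ Icc a b, pt T k)) := by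
  intro d
  induction d using Nat.strong_induction_on with
  | _ d IH =>
  intro p hp hlenp a b hab hsub hmin
  have hppair := (hL.mem p hp).1
  have hspos : 0 < (freeSet T p).card := Finset.card_pos.2 (freeSet_nonempty hL hp)
  have hchildsum : ∀ C ∈ children T p, ∑ k ∈ Icc C.1 C.2, pt T k = (3:ℝ) ^ len C := by
    intro C hC
    obtain ⟨hCT, hCne, hCsub⟩ := children_spec hC
    have hlt : len C < len p := child_len_lt hL hp hC
    have h1 := (hL.mem C hCT).1
    exact (IH (len C) (by omega) C hCT (le_refl _) C.1 C.2 h1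
      ⟨le_refl _, le_refl _⟩ (self_min hL hCT)).1 (by rw [Prod.mk.eta]; exact hCT)
  by_cases hT : (a, b) ∈ T
  · -- equality case
    have hpe : p = (a, b) := by
      have h2 := hmin (a, b) hT ⟨le_refl _, le_refl _⟩
      obtain ⟨x1, x2⟩ := h2; obtain ⟨y1, y2⟩ := hsub
      exact Prod.ext (by omega) (by omega)
    subst hpe
    refine ⟨fun _ => ?_, fun h => absurd hT h⟩
    have hfree : ∑ k ∈ freeSet T (a, b), pt T k = exc T (a, b) := by
      have h0 : ∑ k ∈ freeSet T (a, b), pt T k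
          = ∑ _k ∈ freeSet T (a, b), (exc T (a, b) / ((freeSet T (a, b)).card : ℝ)) :=
        Finset.sum_congr rfl (fun k hk => pt_free hL hp (mem_filter.1 hk).2)
      rw [h0, Finset.sum_const, nsmul_eq_mul]
      have hne0 : ((freeSet T (a, b)).card : ℝ) ≠ 0 := by
        have := hspos; positivity
      field_simp
    have hd : ∑ k ∈ Icc a b, pt T k
        = exc T (a, b) + ∑ C ∈ children T (a, b), (3:ℝ) ^ len C := by
      have hdec := sum_decomp_self hL (pt T) hp
      simp only at hdec
      rw [hdec, hfree]
      congr 1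
      exact Finset.sum_congr rfl hchildsum
    rw [hd, exc]
    have hl : len (a, b) = b + 1 - a := rfl
    rw [hl]; ring
  · -- strict case
    refine ⟨fun h => absurd h hT, fun _ => ?_⟩
    have hpne : p ≠ (a, b) := fun h => hT (h ▸ hp)
    have hdec := sum_decomp hL (pt T) hp hab hsub
    set s := (freeSet T p).card with hsdef
    set F := (Icc a b).filter (Free T p) with hFdef
    set f := F.card with hfdef
    set Bl := (children T p).filter (fun C => C.1 ≤ b ∧ a ≤ C.2) with hBldef
    set cs := ∑ C ∈ children T p, len C with hcsdef
    set B := ∑ C ∈ Bl, (min b C.2 + 1 - max a C.1) with hBdef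
    have hlenp_eq : len p = s + cs := len_decomp_self hL hp
    have hlenI : b + 1 - a = f + B := card_decomp hL hp hab hsub
    have hIlt : b + 1 - a < len p := by
      obtain ⟨x1, x2⟩ := hsub
      have h3 : a ≠ p.1 ∨ b ≠ p.2 := by
        by_contra h; push_neg at h
        exact hpne (Prod.ext h.1.symm h.2.symm)
      unfold len; omega
    have hmax' : ∀ C ∈ T, C ≠ p → Sub C p → ¬ Sub (a, b) C := by
      intro C hC hne hsubC hsubI
      have h2 := hmin C hC hsubI
      obtain ⟨x1, x2⟩ := h2; obtain ⟨y1, y2⟩ := hsubC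
      exact hne (Prod.ext (by omega) (by omega))
    have hf1 : 1 ≤ f := by
      obtain ⟨k, hk1, hk2, hk3⟩ := exists_free hL hp hab hsub hmax'
      exact Finset.card_pos.2 ⟨k, mem_filter.2 ⟨mem_Icc.2 ⟨hk1, hk2⟩, hk3⟩⟩
    have hBcs : B ≤ cs := by
      calc B ≤ ∑ C ∈ Bl, len C := Finset.sum_le_sum (fun C hC => by
              obtain ⟨hCch, h1, h2⟩ := mem_filter.1 hC
              obtain ⟨hCT, _, _⟩ := children_spec hCch
              have h3 := (hL.mem C hCT).1
              unfold len; omega)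
        _ ≤ cs := Finset.sum_le_sum_of_subset (Finset.filter_subset _ _)
    have hlp1 : 1 ≤ len p := by unfold len; omega
    have hexc : (2:ℝ) * 3 ^ (len p - 1) ≤ exc T p := by
      have h3 : (3:ℝ) ^ len p = 3 * 3 ^ (len p - 1) := by
        rw [← pow_succ']; congr 1; omega
      by_cases hch : (children T p).Nonempty
      · have h1 : ∑ C ∈ children T p, (3:ℝ) ^ len C ≤ 3 ^ cs :=
          real_sum_pow3 len hch (fun C hC => by
            obtain ⟨hCT, _, _⟩ := children_spec hC
            have h4 := (hL.mem C hCT).1; unfold len; omega)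
        have h2 : (3:ℝ) ^ cs ≤ 3 ^ (len p - 1) := by
          apply pow_le_pow_right₀ (by norm_num)
          omega
        unfold exc
        rw [h3]
        linarith
      · rw [Finset.not_nonempty_iff_eq_empty] at hch
        unfold exc
        rw [hch]
        simp only [Finset.sum_empty, sub_zero]
        rw [h3]
        nlinarith [pow_pos (by norm_num : (0:ℝ) < 3) (len p - 1)]
    have hblock : ∀ C ∈ Bl, (3:ℝ) ^ (min b C.2 + 1 - max a C.1)
        ≤ ∑ k ∈ Icc (max a C.1) (min b C.2), pt T k := by
      intro C hC
      obtain ⟨hCch, h1, h2⟩ := mem_filter.1 hC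
      obtain ⟨hCT, hCne, hCsub⟩ := children_spec hCch
      have hC12 := (hL.mem C hCT).1
      have hab' : max a C.1 ≤ min b C.2 := by omega
      have hbM' : min b C.2 ≤ M := by have := (hL.mem C hCT).2; omega
      obtain ⟨q, hq, hqsub, hqmin⟩ := exists_min_member hL hab' hbM'
      have hqC : Sub q C := hqmin C hCT ⟨by omega, by omega⟩
      have hqlen : len q ≤ len C := by
        have h4 := (hL.mem q hq).1; obtain ⟨x1, x2⟩ := hqC; unfold len; omega
      have hlt : len C < len p := child_len_lt hL hp hCch
      have hres := IH (len q) (by omega) q hq (le_refl _) (max a C.1) (min b C.2)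
        hab' hqsub hqmin
      by_cases hbT : (max a C.1, min b C.2) ∈ T
      · exact le_of_eq (hres.1 hbT).symm
      · exact le_of_lt (hres.2 hbT)
    have hfreesum : ∑ k ∈ F, pt T k = (f : ℝ) * (exc T p / s) := by
      have h0 : ∑ k ∈ F, pt T k = ∑ _k ∈ F, (exc T p / (s : ℝ)) :=
        Finset.sum_congr rfl (fun k hk => pt_free hL hp (mem_filter.1 hk).2)
      rw [h0, Finset.sum_const, nsmul_eq_mul]
    have hspos' : (0:ℝ) < s := by exact_mod_cast hspos
    by_cases hBl : Bl.Nonempty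
    · set g := len p - 1 - (b + 1 - a) with hgdef
      have hnat : s ≤ 2 * (f * 3 ^ g) := by
        have h5 : s ≤ g + 1 + f := by omega
        have h6 : g + 1 ≤ f * (g + 1) := Nat.le_mul_of_pos_left _ (by omega)
        have h7 : f ≤ f * (g + 1) := Nat.le_mul_of_pos_right _ (by omega)
        have h8 : f * (g + 1) ≤ f * 3 ^ g := Nat.mul_le_mul_left f (nat_pow3' g)
        omega
      have hsplit : len p - 1 = g + (b + 1 - a) := by omega
      have hkey : (3:ℝ) ^ (b + 1 - a) ≤ (f:ℝ) * (exc T p / s) := by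
        rw [mul_div_assoc', le_div_iff₀ hspos']
        have h1 : (f:ℝ) * (2 * 3 ^ (len p - 1)) ≤ f * exc T p :=
          mul_le_mul_of_nonneg_left hexc (Nat.cast_nonneg _)
        have h2 : (f:ℝ) * (2 * 3 ^ (len p - 1)) = 2 * ((f:ℝ) * 3 ^ g) * 3 ^ (b + 1 - a) := by
          rw [hsplit, pow_add]; ring
        have h3 : ((s:ℝ)) ≤ 2 * ((f:ℝ) * 3 ^ g) := by exact_mod_cast hnat
        have h4 : (0:ℝ) < 3 ^ (b + 1 - a) := by positivity
        nlinarith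
      have hblpos : (0:ℝ) < ∑ C ∈ Bl, ∑ k ∈ Icc (max a C.1) (min b C.2), pt T k := by
        apply Finset.sum_pos ?_ hBl
        intro C hC
        calc (0:ℝ) < 3 ^ (min b C.2 + 1 - max a C.1) := by positivity
          _ ≤ _ := hblock C hC
      calc (3:ℝ) ^ (b + 1 - a) ≤ (f:ℝ) * (exc T p / s) := hkey
        _ < (f:ℝ) * (exc T p / s)
            + ∑ C ∈ Bl, ∑ k ∈ Icc (max a C.1) (min b C.2), pt T k := by linarith
        _ = ∑ k ∈ Icc a b, pt T k := by rw [hdec, hfreesum]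
    · rw [Finset.not_nonempty_iff_eq_empty] at hBl
      have hB0 : B = 0 := by rw [hBdef, hBl]; simp
      have hfI : b + 1 - a = f := by omega
      have hgoal : ∑ k ∈ Icc a b, pt T k = (f:ℝ) * (exc T p / s) := by
        rw [hdec, hfreesum, hBl]
        simp
      rw [hgoal, hfI]
      by_cases hch : (children T p).Nonempty
      · have hcs1 : 1 ≤ cs := by
          obtain ⟨C, hC⟩ := hch
          obtain ⟨hCT, _, _⟩ := children_spec hC
          have h1 := (hL.mem C hCT).1
          calc 1 ≤ len C := by unfold len; omega
            _ ≤ cs := Finset.single_le_sum (f := len) (fun i _ => Nat.zero_le _) hC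
        have hfs : f ≤ s := by
          apply Finset.card_le_card
          intro k hk
          obtain ⟨hk1, hk2⟩ := mem_filter.1 hk
          refine mem_filter.2 ⟨mem_Icc.2 ?_, hk2⟩
          have h3 := mem_Icc.1 hk1; obtain ⟨x1, x2⟩ := hsub; omega
        have hexc2 : (3:ℝ) ^ cs * (3 ^ s - 1) ≤ exc T p := by
          have h1 : ∑ C ∈ children T p, (3:ℝ) ^ len C ≤ 3 ^ cs :=
            real_sum_pow3 len hch (fun C hC => by
              obtain ⟨hCT, _, _⟩ := children_spec hC
              have h4 := (hL.mem C hCT).1; unfold len; omega)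
          have h2 : (3:ℝ) ^ len p = 3 ^ cs * 3 ^ s := by
            rw [hlenp_eq, pow_add]; ring
          unfold exc
          rw [h2]
          ring_nf
          ring_nf at h1
          linarith
        have hrm := realmain f s hf1 hfs
        have h3cs : (3:ℝ) ≤ 3 ^ cs := pow3_ge_three hcs1
        have h3s1 : (0:ℝ) ≤ 3 ^ s - 1 := by
          have h5 : (1:ℝ) ≤ 3 ^ s := one_le_pow₀ (by norm_num)
          linarith
        rw [mul_div_assoc', lt_div_iff₀ hspos']
        have hf0 : (0:ℝ) ≤ (f:ℝ) := Nat.cast_nonneg _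
        have hstep : 3 * (f:ℝ) * (3 ^ s - 1) ≤ (f:ℝ) * ((3:ℝ) ^ cs * (3 ^ s - 1)) := by
          have hh : (0:ℝ) ≤ (f:ℝ) * (3 ^ s - 1) * (3 ^ cs - 3) :=
            mul_nonneg (mul_nonneg hf0 h3s1) (by linarith)
          nlinarith [hh]
        have hstep2 : (f:ℝ) * ((3:ℝ) ^ cs * (3 ^ s - 1)) ≤ (f:ℝ) * exc T p :=
          mul_le_mul_of_nonneg_left hexc2 hf0
        nlinarith [hrm, hstep, hstep2]
      · rw [Finset.not_nonempty_iff_eq_empty] at hch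
        have hcs0 : cs = 0 := by rw [hcsdef, hch]; simp
        have hsL : s = len p := by omega
        have hexc3 : exc T p = 3 ^ len p := by
          unfold exc; rw [hch]; simp
        have hflt : f < len p := by omega
        have hrm := realmain2 f (len p) hf1 hflt
        rw [hexc3, hsL, mul_div_assoc', lt_div_iff₀ (by exact_mod_cast (by omega : 0 < len p))]
        calc (3:ℝ) ^ f * (len p) = (len p : ℝ) * 3 ^ f := by ring
          _ < f * 3 ^ len p := hrm

theorem pt_spec (hL : IsLam M T) (a b : ℕ) (hab : a ≤ b) (hbM : b ≤ M) :
    ((a, b) ∈ T → ∑ k ∈ Icc a b, pt T k = 3 ^ (b + 1 - a)) ∧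
    ((a, b) ∉ T → (3:ℝ) ^ (b + 1 - a) < ∑ k ∈ Icc a b, pt T k) := by
  obtain ⟨p, hp, hsub, hmin⟩ := exists_min_member hL hab hbM
  exact key hL (len p) p hp (le_refl _) a b hab hsub hmin


def SSubb (q p : ℕ × ℕ) : Prop :=
  p.1 ≤ q.1 ∧ q.2 ≤ p.2 ∧ q ≠ p ∧ q.1 ≤ q.2 ∧ p.1 ≤ p.2

noncomputable def coeffs (T : Finset (ℕ × ℕ)) (c : ℕ × ℕ → ℝ) (p : ℕ × ℕ) : ℝ :=
  c p - ∑ q ∈ (T.filter (fun q => SSubb q p)).attach, coeffs T c q.1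
termination_by len p
decreasing_by
  have hq := q.2
  rw [mem_filter] at hq
  obtain ⟨-, h1, h2, h3, h4, h5⟩ := hq
  have h6 : q.1.1 ≠ p.1 ∨ q.1.2 ≠ p.2 := by
    by_contra h; push_neg at h; exact h3 (Prod.ext h.1 h.2)
  unfold len; omega

lemma coeffs_spec (T : Finset (ℕ × ℕ)) (c : ℕ × ℕ → ℝ) (p : ℕ × ℕ) :
    coeffs T c p = c p - ∑ q ∈ T.filter (fun q => SSubb q p), coeffs T c q := by
  rw [coeffs]
  congr 1
  exact Finset.sum_attach _ _

def kslot (T : Finset (ℕ × ℕ)) (p : ℕ × ℕ) : ℕ :=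
  if h : (freeSet T p).Nonempty then h.choose else 0

variable {M : ℕ} {T : Finset (ℕ × ℕ)}

lemma kslot_free (hL : IsLam M T) {p : ℕ × ℕ} (hp : p ∈ T) : Free T p (kslot T p) := by
  rw [kslot, dif_pos (freeSet_nonempty hL hp)]
  exact (mem_filter.1 (freeSet_nonempty hL hp).choose_spec).2

lemma kslot_iff (hL : IsLam M T) {p q : ℕ × ℕ} (hp : p ∈ T) (hq : q ∈ T) :
    Memi (kslot T q) p ↔ Sub q p := by
  have hfree := kslot_free hL hq
  constructor
  · intro hmem
    obtain ⟨w1, w2⟩ := hfree.1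
    obtain ⟨v1, v2⟩ := hmem
    rcases nested_of_overlap hL hp hq (by omega) (by omega) with h | h
    · by_cases hpq : p = q
      · subst hpq; exact ⟨le_refl _, le_refl _⟩
      · exact absurd ⟨v1, v2⟩ (hfree.2 p hp hpq h)
    · exact h
  · intro hsub
    obtain ⟨w1, w2⟩ := hfree.1
    obtain ⟨x1, x2⟩ := hsub
    exact ⟨by omega, by omega⟩

lemma sum_coeffs (hL : IsLam M T) (c : ℕ × ℕ → ℝ) {p : ℕ × ℕ} (hp : p ∈ T) :
    ∑ q ∈ T.filter (fun q => Sub q p), coeffs T c q = c p := by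
  classical
  have hsplit : T.filter (fun q => Sub q p) = insert p (T.filter (fun q => SSubb q p)) := by
    ext q
    simp only [mem_filter, Finset.mem_insert]
    constructor
    · rintro ⟨hqT, hqsub⟩
      by_cases hqp : q = p
      · exact Or.inl hqp
      · exact Or.inr ⟨hqT, hqsub.1, hqsub.2, hqp, (hL.mem q hqT).1, (hL.mem p hp).1⟩
    · rintro (rfl | ⟨hqT, h1, h2, h3, h4, h5⟩)
      · exact ⟨hp, le_refl _, le_refl _⟩
      · exact ⟨hqT, h1, h2⟩
  rw [hsplit, Finset.sum_insert (by
    rw [mem_filter]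
    rintro ⟨-, -, -, h3, -⟩
    exact h3 rfl)]
  rw [coeffs_spec]
  ring

lemma solve (hL : IsLam M T) (c : ℕ × ℕ → ℝ) {p : ℕ × ℕ} (hp : p ∈ T) :
    ∑ k ∈ Icc p.1 p.2, (∑ q ∈ T.filter (fun q => kslot T q = k), coeffs T c q) = c p := by
  classical
  have h1 : ∀ k ∈ Icc p.1 p.2, (∑ q ∈ T.filter (fun q => kslot T q = k), coeffs T c q)
      = ∑ q ∈ T, if kslot T q = k then coeffs T c q else 0 :=
    fun k _ => Finset.sum_filter _ _
  rw [Finset.sum_congr rfl h1, Finset.sum_comm]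
  have h2 : ∀ q ∈ T, (∑ k ∈ Icc p.1 p.2, if kslot T q = k then coeffs T c q else 0)
      = if kslot T q ∈ Icc p.1 p.2 then coeffs T c q else 0 :=
    fun q _ => Finset.sum_ite_eq (Icc p.1 p.2) (kslot T q) (fun _ => coeffs T c q)
  rw [Finset.sum_congr rfl h2, ← Finset.sum_filter]
  rw [show T.filter (fun q => kslot T q ∈ Icc p.1 p.2) = T.filter (fun q => Sub q p) from
    Finset.filter_congr (fun q hq => by
      rw [mem_Icc]
      exact ⟨fun h => (kslot_iff hL hp hq).1 h, fun h => (kslot_iff hL hp hq).2 h⟩)]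
  exact sum_coeffs hL c hp

lemma kslot_inj (hL : IsLam M T) {p q : ℕ × ℕ} (hp : p ∈ T) (hq : q ∈ T)
    (h : kslot T p = kslot T q) : p = q :=
  free_unique hL hp hq (kslot_free hL hp) (h ▸ kslot_free hL hq)

/-- splitting a sum over an interval -/
lemma Icc_sum_split (t : ℕ → ℝ) {u v w : ℕ} (h1 : u ≤ v) (h2 : v < w) :
    ∑ k ∈ Icc u w, t k = ∑ k ∈ Icc u v, t k + ∑ k ∈ Icc (v+1) w, t k := by
  rw [← Finset.sum_union (by
    simp only [Finset.disjoint_left, mem_Icc]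
    intro k hk1 hk2; omega)]
  congr 1
  ext k
  simp only [Finset.mem_union, mem_Icc]
  omega

section Incompat

variable (t : ℕ → ℝ) (M : ℕ)
variable (hge : ∀ a b : ℕ, a ≤ b → b ≤ M → ¬(a = 0 ∧ b = M) →
    (3:ℝ) ^ (b + 1 - a) ≤ ∑ k ∈ Icc a b, t k)
variable (hroot : ∑ k ∈ Icc 0 M, t k = 3 ^ (M + 1))

include hge hroot in
lemma cross_false {a b c d : ℕ} (hab : a ≤ b) (hbM : b ≤ M) (hcd : c ≤ d) (hdM : d ≤ M)
    (h1 : ∑ k ∈ Icc a b, t k = 3 ^ (b + 1 - a))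
    (h2 : ∑ k ∈ Icc c d, t k = 3 ^ (d + 1 - c))
    (hac : a < c) (hcb : c ≤ b + 1) (hbd : b < d) : False := by
  have hSad : (3:ℝ) ^ (d + 1 - a) ≤ ∑ k ∈ Icc a d, t k := by
    by_cases hfull : a = 0 ∧ d = M
    · obtain ⟨rfl, rfl⟩ := hfull
      rw [hroot]
      norm_num
    · exact hge a d (by omega) hdM hfull
  have h3u : (3:ℝ) ^ (d + 1 - a) = 3 * 3 ^ (d + 1 - a - 1) := by
    rw [← pow_succ']; congr 1; omega
  have hβ : (3:ℝ) ^ (b + 1 - a) ≤ 3 ^ (d + 1 - a - 1) :=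
    pow_le_pow_right₀ (by norm_num) (by omega)
  have hδ : (3:ℝ) ^ (d + 1 - c) ≤ 3 ^ (d + 1 - a - 1) :=
    pow_le_pow_right₀ (by norm_num) (by omega)
  by_cases hover : c ≤ b
  · -- overlapping case
    have hc1 : c - 1 + 1 = c := by omega
    have hsplit1 : ∑ k ∈ Icc a d, t k = ∑ k ∈ Icc a (c-1), t k + ∑ k ∈ Icc c d, t k := by
      have h := Icc_sum_split t (u := a) (v := c-1) (w := d) (by omega) (by omega)
      rw [hc1] at h
      exact h
    have hsplit2 : ∑ k ∈ Icc a b, t k = ∑ k ∈ Icc a (c-1), t k + ∑ k ∈ Icc c b, t k := by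
      have h := Icc_sum_split t (u := a) (v := c-1) (w := b) (by omega) (by omega)
      rw [hc1] at h
      exact h
    have hScb : (3:ℝ) ^ (b + 1 - c) ≤ ∑ k ∈ Icc c b, t k :=
      hge c b hover hbM (by omega)
    have hγ : (0:ℝ) < 3 ^ (b + 1 - c) := by positivity
    -- S a d + S c b = S a b + S c d
    linarith [pow_pos (by norm_num : (0:ℝ) < 3) (d + 1 - a - 1)]
  · -- adjacent case : c = b + 1
    have hcb' : c = b + 1 := by omega
    have hsplit : ∑ k ∈ Icc a d, t k = ∑ k ∈ Icc a b, t k + ∑ k ∈ Icc c d, t k := by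
      have := Icc_sum_split t (u := a) (v := b) (w := d) hab hbd
      rw [this, hcb']
    linarith [pow_pos (by norm_num : (0:ℝ) < 3) (d + 1 - a - 1)]

include hge hroot in
lemma tight_compat {a b c d : ℕ} (hab : a ≤ b) (hbM : b ≤ M) (hcd : c ≤ d) (hdM : d ≤ M)
    (h1 : ∑ k ∈ Icc a b, t k = 3 ^ (b + 1 - a))
    (h2 : ∑ k ∈ Icc c d, t k = 3 ^ (d + 1 - c)) :
    (a ≤ c ∧ d ≤ b) ∨ (c ≤ a ∧ b ≤ d) ∨ b + 1 < c ∨ d + 1 < a := by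
  by_contra h
  push_neg at h
  obtain ⟨hn1, hn2, hn3, hn4⟩ := h
  rcases lt_trichotomy a c with hac | rfl | hca
  · exact cross_false t M hge hroot hab hbM hcd hdM h1 h2 hac (by omega)
      (hn1 (le_of_lt hac))
  · have h3 := hn1 (le_refl a)
    have h4 := hn2 (le_refl a)
    omega
  · exact cross_false t M hge hroot hcd hdM hab hbM h2 h1 hca (by omega)
      (hn2 (le_of_lt hca))

end Incompat


end KnAux

namespace KnAux

section Glue

def extF (m : ℕ) (t : Fin m → ℝ) : ℕ → ℝ := fun k => if h : k < m then t ⟨k, h⟩ else 0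

lemma sum_Icc_fin {m : ℕ} (t : Fin m → ℝ) (i j : Fin m) :
    ∑ k ∈ Icc i j, t k = ∑ k ∈ Icc (i : ℕ) (j : ℕ), extF m t k := by
  rw [← Fin.map_valEmbedding_Icc, Finset.sum_map]
  refine Finset.sum_congr rfl fun x _ => ?_
  simp [extF, x.isLt]

lemma card_Icc_fin {m : ℕ} (i j : Fin m) : (Icc i j).card = (j : ℕ) + 1 - (i : ℕ) := by
  rw [← Finset.card_map Fin.valEmbedding, Fin.map_valEmbedding_Icc, Nat.card_Icc]

lemma sum_univ_fin {m : ℕ} (hm : 1 ≤ m) (t : Fin m → ℝ) :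
    ∑ k, t k = ∑ k ∈ Icc 0 (m - 1), extF m t k := by
  have h1 : ∑ k, t k = ∑ k ∈ range m, extF m t k := by
    rw [← Fin.sum_univ_eq_sum_range (extF m t)]
    exact Finset.sum_congr rfl fun x _ => by simp [extF, x.isLt]
  rw [h1]
  congr 1
  ext k
  simp only [Finset.mem_range, mem_Icc]
  omega

end Glue

section Glue2

open scoped Classical

variable {n : ℕ}

def Tof (n : ℕ) (ι : Finset (Fin (n-1) × Fin (n-1))) : Finset (ℕ × ℕ) :=
  insert (0, n-2) (ι.image (fun p => ((p.1 : ℕ), (p.2 : ℕ))))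

lemma mem_Tof_of_mem {ι : Finset (Fin (n-1) × Fin (n-1))} {p : Fin (n-1) × Fin (n-1)}
    (hp : p ∈ ι) : ((p.1 : ℕ), (p.2 : ℕ)) ∈ Tof n ι :=
  Finset.mem_insert_of_mem (Finset.mem_image_of_mem _ hp)

lemma root_not_img (hn : 2 ≤ n) {ι : Finset (Fin (n-1) × Fin (n-1))}
    (hprop : ∀ p ∈ ι, ProperInt n p) :
    (0, n-2) ∉ ι.image (fun p => ((p.1 : ℕ), (p.2 : ℕ))) := by
  rw [Finset.mem_image]
  rintro ⟨p, hp, hpe⟩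
  rw [Prod.mk.injEq] at hpe
  exact (hprop p hp).2 ⟨hpe.1, hpe.2⟩

lemma mem_Tof_iff (hn : 2 ≤ n) {ι : Finset (Fin (n-1) × Fin (n-1))}
    (hprop : ∀ p ∈ ι, ProperInt n p) {q : Fin (n-1) × Fin (n-1)} (hq : ProperInt n q) :
    (((q.1 : ℕ), (q.2 : ℕ)) ∈ Tof n ι ↔ q ∈ ι) := by
  constructor
  · intro h
    rcases Finset.mem_insert.1 h with h | h
    · rw [Prod.mk.injEq] at h
      exact absurd ⟨h.1, h.2⟩ hq.2
    · rw [Finset.mem_image] at h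
      obtain ⟨p, hp, hpe⟩ := h
      rw [Prod.mk.injEq] at hpe
      have : p = q := Prod.ext (Fin.ext hpe.1) (Fin.ext hpe.2)
      exact this ▸ hp
  · exact mem_Tof_of_mem

lemma Tof_isLam (hn : 2 ≤ n) {ι : Finset (Fin (n-1) × Fin (n-1))}
    (hprop : ∀ p ∈ ι, ProperInt n p) (hcomp : ∀ p ∈ ι, ∀ q ∈ ι, CompatInt n p q) :
    IsLam (n-2) (Tof n ι) := by
  constructor
  · intro p hp
    rcases Finset.mem_insert.1 hp with rfl | hp
    · exact ⟨by omega, le_refl _⟩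
    · rw [Finset.mem_image] at hp
      obtain ⟨q, hq, rfl⟩ := hp
      have h1 := (hprop q hq).1
      have h2 := q.2.isLt
      exact ⟨h1, by omega⟩
  · exact Finset.mem_insert_self _ _
  · intro p hp q hq
    rcases Finset.mem_insert.1 hp with rfl | hp <;> rcases Finset.mem_insert.1 hq with rfl | hq
    · exact Or.inl ⟨le_refl _, le_refl _⟩
    · rw [Finset.mem_image] at hq
      obtain ⟨q', hq', rfl⟩ := hq
      refine Or.inr (Or.inl ⟨Nat.zero_le _, ?_⟩)
      have := q'.2.isLt; simp only; omega
    · rw [Finset.mem_image] at hp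
      obtain ⟨p', hp', rfl⟩ := hp
      refine Or.inl ⟨Nat.zero_le _, ?_⟩
      have := p'.2.isLt; simp only; omega
    · rw [Finset.mem_image] at hp hq
      obtain ⟨p', hp', rfl⟩ := hp
      obtain ⟨q', hq', rfl⟩ := hq
      rcases hcomp p' hp' q' hq' with h | h | h | h
      · exact Or.inr (Or.inl ⟨h.1, h.2⟩)
      · exact Or.inl ⟨h.1, h.2⟩
      · exact Or.inr (Or.inr (Or.inl h))
      · exact Or.inr (Or.inr (Or.inr h))

def xstar (n : ℕ) (ι : Finset (Fin (n-1) × Fin (n-1))) : Fin (n-1) → ℝ :=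
  fun k => pt (Tof n ι) (k : ℕ)

lemma sum_Icc_xstar (hn : 2 ≤ n) (ι : Finset (Fin (n-1) × Fin (n-1)))
    (i j : Fin (n-1)) :
    ∑ k ∈ Icc i j, xstar n ι k = ∑ k ∈ Icc (i : ℕ) (j : ℕ), pt (Tof n ι) k := by
  rw [sum_Icc_fin]
  refine Finset.sum_congr rfl fun k hk => ?_
  have hk' : k < n - 1 := lt_of_le_of_lt (mem_Icc.1 hk).2 j.isLt
  simp [extF, hk', xstar]

lemma sum_univ_xstar (hn : 2 ≤ n) (ι : Finset (Fin (n-1) × Fin (n-1))) :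
    ∑ k, xstar n ι k = ∑ k ∈ Icc 0 (n-2), pt (Tof n ι) k := by
  rw [sum_univ_fin (by omega)]
  rw [show n - 1 - 1 = n - 2 from by omega]
  refine Finset.sum_congr rfl fun k hk => ?_
  have hk' : k < n - 1 := by have := (mem_Icc.1 hk).2; omega
  simp [extF, hk', xstar]

lemma xstar_spec (hn : 2 ≤ n) {ι : Finset (Fin (n-1) × Fin (n-1))}
    (hprop : ∀ p ∈ ι, ProperInt n p) (hcomp : ∀ p ∈ ι, ∀ q ∈ ι, CompatInt n p q) :
    xstar n ι ∈ KnFace n ι ∧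
      ∀ q : Fin (n-1) × Fin (n-1), ProperInt n q → q ∉ ι →
        (3:ℝ) ^ (Icc q.1 q.2).card < ∑ k ∈ Icc q.1 q.2, xstar n ι k := by
  have hL := Tof_isLam hn hprop hcomp
  have hroot : ∑ k, xstar n ι k = 3 ^ (n - 1) := by
    rw [sum_univ_xstar hn]
    have h := (pt_spec hL 0 (n-2) (Nat.zero_le _) (le_refl _)).1 (Finset.mem_insert_self _ _)
    rw [h]
    congr 1
    omega
  have hineq : ∀ i j : Fin (n-1), i ≤ j →
      (3:ℝ) ^ (Icc i j).card ≤ ∑ k ∈ Icc i j, xstar n ι k := by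
    intro i j hij
    rw [sum_Icc_xstar hn, card_Icc_fin]
    have hs := pt_spec hL (i : ℕ) (j : ℕ) hij (by have := j.isLt; omega)
    by_cases hT : ((i : ℕ), (j : ℕ)) ∈ Tof n ι
    · exact le_of_eq (hs.1 hT).symm
    · exact le_of_lt (hs.2 hT)
  refine ⟨⟨⟨hroot, fun i j hij _ => hineq i j hij⟩, ?_⟩, ?_⟩
  · intro p hp
    rw [sum_Icc_xstar hn, card_Icc_fin]
    exact (pt_spec hL (p.1 : ℕ) (p.2 : ℕ) (hprop p hp).1
      (by have := p.2.isLt; omega)).1 (mem_Tof_of_mem hp)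
  · intro q hq hqι
    rw [sum_Icc_xstar hn, card_Icc_fin]
    refine (pt_spec hL (q.1 : ℕ) (q.2 : ℕ) hq.1 (by have := q.2.isLt; omega)).2 ?_
    rw [mem_Tof_iff hn hprop hq]
    exact hqι


lemma knpoly_convex (n : ℕ) : Convex ℝ (KnPoly n) := by
  intro x hx y hy α β hα hβ hαβ
  constructor
  · simp only [Pi.add_apply, Pi.smul_apply, smul_eq_mul]
    rw [Finset.sum_add_distrib, ← Finset.mul_sum, ← Finset.mul_sum, hx.1, hy.1,
      ← add_mul, hαβ, one_mul]
  · intro i j hij hpr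
    simp only [Pi.add_apply, Pi.smul_apply, smul_eq_mul]
    rw [Finset.sum_add_distrib, ← Finset.mul_sum, ← Finset.mul_sum]
    have h1 := hx.2 i j hij hpr
    have h2 := hy.2 i j hij hpr
    have h3 : α * (3:ℝ) ^ (Icc i j).card ≤ α * ∑ k ∈ Icc i j, x k :=
      mul_le_mul_of_nonneg_left h1 hα
    have h4 : β * (3:ℝ) ^ (Icc i j).card ≤ β * ∑ k ∈ Icc i j, y k :=
      mul_le_mul_of_nonneg_left h2 hβ
    have h5 : α * (3:ℝ) ^ (Icc i j).card + β * (3:ℝ) ^ (Icc i j).card = 3 ^ (Icc i j).card := by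
      rw [← add_mul, hαβ, one_mul]
    linarith

lemma perturb (hn : 2 ≤ n) (ι' : Finset (Fin (n-1) × Fin (n-1))) (x v : Fin (n-1) → ℝ)
    (hx : x ∈ KnFace n ι')
    (hstrict : ∀ q : Fin (n-1) × Fin (n-1), ProperInt n q → q ∉ ι' →
      (3:ℝ) ^ (Icc q.1 q.2).card < ∑ k ∈ Icc q.1 q.2, x k)
    (hv0 : ∑ k, v k = 0)
    (hvι : ∀ p ∈ ι', ∑ k ∈ Icc p.1 p.2, v k = 0) :
    ∃ δ : ℝ, 0 < δ ∧ x + δ • v ∈ KnFace n ι' := by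
  classical
  set D := (univ : Finset (Fin (n-1) × Fin (n-1))).filter
    (fun q => ProperInt n q ∧ q ∉ ι') with hDdef
  obtain ⟨δ, hδ0, hδ⟩ : ∃ δ : ℝ, 0 < δ ∧ ∀ q ∈ D,
      δ * |∑ k ∈ Icc q.1 q.2, v k| ≤ (∑ k ∈ Icc q.1 q.2, x k) - 3 ^ (Icc q.1 q.2).card := by
    by_cases hDne : D.Nonempty
    · set gfun := fun q : Fin (n-1) × Fin (n-1) =>
        ((∑ k ∈ Icc q.1 q.2, x k) - 3 ^ (Icc q.1 q.2).card)
          / (|∑ k ∈ Icc q.1 q.2, v k| + 1) with hgfun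
      refine ⟨min 1 (D.inf' hDne gfun), ?_, ?_⟩
      · apply lt_min one_pos
        rw [Finset.lt_inf'_iff]
        intro q hq
        obtain ⟨-, hq1, hq2⟩ := Finset.mem_filter.1 hq
        exact div_pos (sub_pos.2 (hstrict q hq1 hq2)) (by positivity)
      · intro q hq
        obtain ⟨-, hq1, hq2⟩ := Finset.mem_filter.1 hq
        have hs := hstrict q hq1 hq2
        have hpos : (0:ℝ) < ((∑ k ∈ Icc q.1 q.2, x k) - 3 ^ (Icc q.1 q.2).card)
            / (|∑ k ∈ Icc q.1 q.2, v k| + 1) := div_pos (sub_pos.2 hs) (by positivity)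
        have h1 : min 1 (D.inf' hDne gfun) ≤ gfun q :=
          le_trans (min_le_right _ _) (Finset.inf'_le gfun hq)
        have habs : (0:ℝ) ≤ |∑ k ∈ Icc q.1 q.2, v k| := abs_nonneg _
        calc min 1 (D.inf' hDne gfun) * |∑ k ∈ Icc q.1 q.2, v k|
            ≤ gfun q * (|∑ k ∈ Icc q.1 q.2, v k| + 1) :=
              mul_le_mul h1 (by linarith) habs (le_of_lt hpos)
          _ = (∑ k ∈ Icc q.1 q.2, x k) - 3 ^ (Icc q.1 q.2).card := by
              rw [hgfun]
              field_simp
    · exact ⟨1, one_pos, fun q hq => absurd ⟨q, hq⟩ hDne⟩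
  refine ⟨δ, hδ0, ⟨?_, ?_⟩, ?_⟩
  · simp only [Pi.add_apply, Pi.smul_apply, smul_eq_mul]
    rw [Finset.sum_add_distrib, ← Finset.mul_sum, hv0, hx.1.1]
    ring
  · intro i j hij hpr
    simp only [Pi.add_apply, Pi.smul_apply, smul_eq_mul]
    rw [Finset.sum_add_distrib, ← Finset.mul_sum]
    by_cases hmem : (i, j) ∈ ι'
    · have h1 := hvι (i, j) hmem
      have h2 := hx.2 (i, j) hmem
      simp only at h1 h2
      rw [h1, h2]
      simp
    · have hq : (i, j) ∈ D := Finset.mem_filter.2 ⟨mem_univ _, ⟨hij, hpr⟩, hmem⟩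
      have h3 := hδ (i, j) hq
      simp only at h3
      have h4 : |δ * ∑ k ∈ Icc i j, v k| = δ * |∑ k ∈ Icc i j, v k| := by
        rw [abs_mul, abs_of_pos hδ0]
      have h5 := neg_abs_le (δ * ∑ k ∈ Icc i j, v k)
      rw [h4] at h5
      have h6 := hstrict (i, j) ⟨hij, hpr⟩ hmem
      simp only at h6
      linarith
  · intro p hp
    simp only [Pi.add_apply, Pi.smul_apply, smul_eq_mul]
    rw [Finset.sum_add_distrib, ← Finset.mul_sum, hvι p hp, hx.2 p hp]
    ring


noncomputable def sumIcc (m a b : ℕ) : (Fin m → ℝ) →ₗ[ℝ] ℝ where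
  toFun t := ∑ k ∈ Icc a b, extF m t k
  map_add' t u := by
    rw [← Finset.sum_add_distrib]
    refine Finset.sum_congr rfl fun k _ => ?_
    unfold extF
    by_cases h : k < m <;> simp [h]
  map_smul' c t := by
    simp only [RingHom.id_apply, smul_eq_mul]
    rw [Finset.mul_sum]
    refine Finset.sum_congr rfl fun k _ => ?_
    unfold extF
    by_cases h : k < m <;> simp [h]

lemma hface_sums (hn : 2 ≤ n) {ι : Finset (Fin (n-1) × Fin (n-1))}
    {x : Fin (n-1) → ℝ} (hx : x ∈ KnFace n ι) :
    ∀ J ∈ Tof n ι, ∑ k ∈ Icc J.1 J.2, extF (n-1) x k = 3 ^ (J.2 + 1 - J.1) := by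
  intro J hJ
  rcases Finset.mem_insert.1 hJ with rfl | hJ
  · simp only
    have h1 := (sum_univ_fin (m := n-1) (by omega) x).symm
    rw [show n - 1 - 1 = n - 2 from by omega] at h1
    rw [h1, hx.1.1]
    congr 1
    omega
  · rw [Finset.mem_image] at hJ
    obtain ⟨p, hp, rfl⟩ := hJ
    simp only
    rw [← sum_Icc_fin, hx.2 p hp, card_Icc_fin]

lemma part1 (hn : 2 ≤ n) (ι : Finset (Fin (n-1) × Fin (n-1)))
    (hprop : ∀ p ∈ ι, ProperInt n p) (hcomp : ∀ p ∈ ι, ∀ q ∈ ι, CompatInt n p q) :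
    (KnFace n ι).Nonempty ∧ IsExposed ℝ (KnPoly n) (KnFace n ι) ∧
      Module.finrank ℝ (vectorSpan ℝ (KnFace n ι)) + ι.card + 2 = n := by
  classical
  obtain ⟨hx1, hstrict⟩ := xstar_spec hn hprop hcomp
  have hL := Tof_isLam hn hprop hcomp
  refine ⟨⟨xstar n ι, hx1⟩, ?_, ?_⟩
  · -- IsExposed
    by_cases hι : ι = ∅
    · subst hι
      intro _
      refine ⟨0, ?_⟩
      ext t
      constructor
      · intro h
        exact ⟨h.1, fun y _ => by simp⟩
      · intro h
        exact ⟨h.1, fun p hp => absurd hp (Finset.notMem_empty p)⟩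
    · intro _
      set L0 : (Fin (n-1) → ℝ) →ₗ[ℝ] ℝ :=
        - ∑ p ∈ ι, (∑ k ∈ Icc p.1 p.2, LinearMap.proj k) with hL0
      refine ⟨LinearMap.toContinuousLinearMap L0, ?_⟩
      have hL0app : ∀ t, LinearMap.toContinuousLinearMap L0 t
          = - ∑ p ∈ ι, ∑ k ∈ Icc p.1 p.2, t k := by
        intro t
        simp [hL0, LinearMap.coe_sum, Finset.sum_apply]
      ext t
      constructor
      · intro ht
        refine ⟨ht.1, ?_⟩
        intro y hy
        rw [hL0app, hL0app]
        have h1 : ∀ p ∈ ι, (3:ℝ) ^ (Icc p.1 p.2).card ≤ ∑ k ∈ Icc p.1 p.2, y k :=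
          fun p hp => hy.2 p.1 p.2 (hprop p hp).1 (hprop p hp).2
        have h3 : ∑ p ∈ ι, ∑ k ∈ Icc p.1 p.2, t k
            = ∑ p ∈ ι, (3:ℝ) ^ (Icc p.1 p.2).card := Finset.sum_congr rfl ht.2
        have h4 := Finset.sum_le_sum h1
        simp only [neg_le_neg_iff]
        linarith
      · rintro ⟨htA, hmax⟩
        refine ⟨htA, ?_⟩
        have h4 := hmax (xstar n ι) hx1.1
        rw [hL0app, hL0app] at h4
        have h5 : ∑ p ∈ ι, ∑ k ∈ Icc p.1 p.2, (xstar n ι) k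
            = ∑ p ∈ ι, (3:ℝ) ^ (Icc p.1 p.2).card := Finset.sum_congr rfl (fun p hp => hx1.2 p hp)
        have h6 : ∀ p ∈ ι, (3:ℝ) ^ (Icc p.1 p.2).card ≤ ∑ k ∈ Icc p.1 p.2, t k :=
          fun p hp => htA.2 p.1 p.2 (hprop p hp).1 (hprop p hp).2
        have h7 : ∑ p ∈ ι, (3:ℝ) ^ (Icc p.1 p.2).card
            = ∑ p ∈ ι, ∑ k ∈ Icc p.1 p.2, t k := by
          refine le_antisymm (Finset.sum_le_sum h6) ?_
          rw [← h5]
          linarith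
        intro p hp
        exact ((Finset.sum_eq_sum_iff_of_le h6).1 h7 p hp).symm
  · -- dimension
    set T := Tof n ι with hT
    set Φ : (Fin (n-1) → ℝ) →ₗ[ℝ] (↥T → ℝ) :=
      LinearMap.pi (fun J : ↥T => sumIcc (n-1) (J : ℕ × ℕ).1 (J : ℕ × ℕ).2) with hΦ
    have hsurj : Function.Surjective Φ := by
      intro c
      set cN : ℕ × ℕ → ℝ := fun p => if h : p ∈ T then c ⟨p, h⟩ else 0 with hcN
      refine ⟨fun k => ∑ q ∈ T.filter (fun q => kslot T q = (k : ℕ)), coeffs T cN q, ?_⟩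
      funext J
      have hJT := J.2
      have hJ2 : (J : ℕ × ℕ).2 ≤ n - 2 := (hL.mem _ hJT).2
      show ∑ k ∈ Icc (J : ℕ × ℕ).1 (J : ℕ × ℕ).2, extF (n-1) _ k = c J
      have hstep : ∀ k ∈ Icc (J : ℕ × ℕ).1 (J : ℕ × ℕ).2,
          extF (n-1) (fun k' : Fin (n-1) =>
            ∑ q ∈ T.filter (fun q => kslot T q = (k' : ℕ)), coeffs T cN q) k
          = ∑ q ∈ T.filter (fun q => kslot T q = k), coeffs T cN q := by
        intro k hk
        have hk' : k < n - 1 := by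
          have := (mem_Icc.1 hk).2; omega
        simp [extF, hk']
      rw [Finset.sum_congr rfl hstep, solve hL cN hJT]
      show (if h : (J : ℕ × ℕ) ∈ T then c ⟨(J : ℕ × ℕ), h⟩ else 0) = c J
      rw [dif_pos hJT]
    have hkerC : vectorSpan ℝ (KnFace n ι) = LinearMap.ker Φ := by
      apply le_antisymm
      · rw [vectorSpan_def, Submodule.span_le]
        rintro w hw
        obtain ⟨x, hx, y, hy, rfl⟩ := hw
        simp only [SetLike.mem_coe, LinearMap.mem_ker]
        funext J
        show sumIcc (n-1) (J : ℕ × ℕ).1 (J : ℕ × ℕ).2 (x -ᵥ y) = 0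
        rw [vsub_eq_sub, map_sub]
        have h1 := hface_sums hn hx (J : ℕ × ℕ) J.2
        have h2 := hface_sums hn hy (J : ℕ × ℕ) J.2
        show (∑ k ∈ Icc (J : ℕ × ℕ).1 (J : ℕ × ℕ).2, extF (n-1) x k)
          - (∑ k ∈ Icc (J : ℕ × ℕ).1 (J : ℕ × ℕ).2, extF (n-1) y k) = 0
        rw [h1, h2, sub_self]
      · intro d hd
        rw [LinearMap.mem_ker] at hd
        have hd' : ∀ J ∈ T, ∑ k ∈ Icc J.1 J.2, extF (n-1) d k = 0 := by
          intro J hJ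
          exact congrFun hd ⟨J, hJ⟩
        have hv0 : ∑ k, d k = 0 := by
          rw [sum_univ_fin (by omega), show n - 1 - 1 = n - 2 from by omega]
          exact hd' (0, n-2) (Finset.mem_insert_self _ _)
        have hvι : ∀ p ∈ ι, ∑ k ∈ Icc p.1 p.2, d k = 0 := by
          intro p hp
          rw [sum_Icc_fin]
          exact hd' _ (mem_Tof_of_mem hp)
        obtain ⟨δ, hδ0, hmem⟩ := perturb hn ι (xstar n ι) d hx1 hstrict hv0 hvι
        have h2 : (xstar n ι + δ • d) -ᵥ xstar n ι ∈ vectorSpan ℝ (KnFace n ι) :=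
          vsub_mem_vectorSpan ℝ hmem hx1
        have h3 : (xstar n ι + δ • d) -ᵥ xstar n ι = δ • d := by
          simp [vsub_eq_sub]
        rw [h3] at h2
        have h4 := Submodule.smul_mem _ δ⁻¹ h2
        rwa [smul_smul, inv_mul_cancel₀ (ne_of_gt hδ0), one_smul] at h4
    have hinj : Function.Injective (fun p : Fin (n-1) × Fin (n-1) => ((p.1 : ℕ), (p.2 : ℕ))) := by
      intro p q h
      rw [Prod.mk.injEq] at h
      exact Prod.ext (Fin.ext h.1) (Fin.ext h.2)
    have hTcard : T.card = ι.card + 1 := by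
      rw [hT, Tof, Finset.card_insert_of_notMem (root_not_img hn hprop),
        Finset.card_image_of_injective _ hinj]
    have hrank := LinearMap.finrank_range_add_finrank_ker Φ
    rw [LinearMap.range_eq_top.2 hsurj, finrank_top] at hrank
    have hc1 : Module.finrank ℝ (↥T → ℝ) = T.card := by
      simp [Module.finrank_pi, Fintype.card_coe]
    have hc2 : Module.finrank ℝ (Fin (n-1) → ℝ) = n - 1 := by
      simp [Module.finrank_pi]
    rw [hc1, hc2, hTcard] at hrank
    rw [hkerC]
    omega

lemma part2 (hn : 2 ≤ n) (F : Set (Fin (n-1) → ℝ)) (hF : IsExposed ℝ (KnPoly n) F)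
    (hne : F.Nonempty) :
    ∃ ι : Finset (Fin (n-1) × Fin (n-1)),
      (∀ p ∈ ι, ProperInt n p) ∧ (∀ p ∈ ι, ∀ q ∈ ι, CompatInt n p q) ∧ F = KnFace n ι := by
  classical
  obtain ⟨l, hl⟩ := hF hne
  obtain ⟨t0, ht0⟩ := hne
  set ιF := (univ : Finset (Fin (n-1) × Fin (n-1))).filter
    (fun p => ProperInt n p ∧ ∀ t ∈ F, ∑ k ∈ Icc p.1 p.2, t k = 3 ^ (Icc p.1 p.2).card)
    with hιFdef
  have hprop : ∀ p ∈ ιF, ProperInt n p := fun p hp => ((Finset.mem_filter.1 hp).2).1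
  have hFsub : F ⊆ KnFace n ιF := by
    intro t ht
    have htA : t ∈ KnPoly n := by rw [hl] at ht; exact ht.1
    exact ⟨htA, fun p hp => ((Finset.mem_filter.1 hp).2).2 t ht⟩
  have ht0A : t0 ∈ KnPoly n := (hFsub ht0).1
  have hcomp : ∀ p ∈ ιF, ∀ q ∈ ιF, CompatInt n p q := by
    intro p hp q hq
    have hge : ∀ a b : ℕ, a ≤ b → b ≤ n - 2 → ¬(a = 0 ∧ b = n - 2) →
        (3:ℝ) ^ (b + 1 - a) ≤ ∑ k ∈ Icc a b, extF (n-1) t0 k := by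
      intro a b hab hbM hpr
      have ha : a < n - 1 := by omega
      have hb : b < n - 1 := by omega
      have h := ht0A.2 ⟨a, ha⟩ ⟨b, hb⟩ hab hpr
      rw [sum_Icc_fin, card_Icc_fin] at h
      exact h
    have hroot : ∑ k ∈ Icc 0 (n-2), extF (n-1) t0 k = 3 ^ ((n-2) + 1) := by
      have h1 := (sum_univ_fin (m := n-1) (by omega) t0).symm
      rw [show n - 1 - 1 = n - 2 from by omega] at h1
      rw [h1, ht0A.1]
      congr 1
      omega
    have htight : ∀ r ∈ ιF, ∑ k ∈ Icc (r.1 : ℕ) (r.2 : ℕ), extF (n-1) t0 k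
        = 3 ^ ((r.2 : ℕ) + 1 - (r.1 : ℕ)) := by
      intro r hr
      have h := ((Finset.mem_filter.1 hr).2).2 t0 ht0
      rw [sum_Icc_fin, card_Icc_fin] at h
      exact h
    have hres := tight_compat (extF (n-1) t0) (n-2) hge hroot
      (a := (p.1 : ℕ)) (b := (p.2 : ℕ)) (c := (q.1 : ℕ)) (d := (q.2 : ℕ))
      (hprop p hp).1 (by have := p.2.isLt; omega)
      (hprop q hq).1 (by have := q.2.isLt; omega)
      (htight p hp) (htight q hq)
    rcases hres with h | h | h | h
    · exact Or.inl ⟨h.1, h.2⟩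
    · exact Or.inr (Or.inl ⟨h.1, h.2⟩)
    · exact Or.inr (Or.inr (Or.inl h))
    · exact Or.inr (Or.inr (Or.inr h))
  set D := (univ : Finset (Fin (n-1) × Fin (n-1))).filter
    (fun q => ProperInt n q ∧ q ∉ ιF) with hDdef
  have hDex : ∀ q ∈ D, ∃ x, x ∈ F ∧
      (3:ℝ) ^ (Icc q.1 q.2).card < ∑ k ∈ Icc q.1 q.2, x k := by
    intro q hq
    obtain ⟨-, hq1, hq2⟩ := Finset.mem_filter.1 hq
    have hnall : ¬ (∀ t ∈ F, ∑ k ∈ Icc q.1 q.2, t k = 3 ^ (Icc q.1 q.2).card) := by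
      intro hall
      exact hq2 (Finset.mem_filter.2 ⟨mem_univ _, hq1, hall⟩)
    push_neg at hnall
    obtain ⟨x, hxF, hxne⟩ := hnall
    refine ⟨x, hxF, lt_of_le_of_ne ?_ (Ne.symm hxne)⟩
    exact ((hFsub hxF).1).2 q.1 q.2 hq1.1 hq1.2
  choose! gx hgxF hgx using hDex
  set w : ℝ := (1 : ℝ) / (D.card + 1) with hw
  have hw0 : 0 < w := by positivity
  set Q : Finset (Option (Fin (n-1) × Fin (n-1))) := insert none (D.image some) with hQ
  set gg : Option (Fin (n-1) × Fin (n-1)) → (Fin (n-1) → ℝ) :=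
    fun o => o.elim t0 gx with hgg
  have hQcard : Q.card = D.card + 1 := by
    rw [hQ, Finset.card_insert_of_notMem (by simp),
      Finset.card_image_of_injective _ (Option.some_injective _)]
  have hggF : ∀ i ∈ Q, gg i ∈ F := by
    intro i hi
    rcases Finset.mem_insert.1 hi with rfl | hi
    · exact ht0
    · obtain ⟨q, hq, rfl⟩ := Finset.mem_image.1 hi
      exact hgxF q hq
  set xb := ∑ i ∈ Q, w • gg i with hxb
  have hconv : Convex ℝ F := hF.convex (knpoly_convex n)
  have hwsum : ∀ N : ℕ, (((N : ℝ) + 1)) * ((1:ℝ) / ((N : ℝ) + 1)) = 1 := by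
    intro N
    have hN : ((N : ℝ) + 1) ≠ 0 := by positivity
    field_simp
  have hxbF : xb ∈ F := by
    refine hconv.sum_mem (fun i _ => le_of_lt hw0) ?_ hggF
    rw [Finset.sum_const, hQcard, nsmul_eq_mul, hw]
    push_cast
    exact hwsum D.card
  have hxbstrict : ∀ q : Fin (n-1) × Fin (n-1), ProperInt n q → q ∉ ιF →
      (3:ℝ) ^ (Icc q.1 q.2).card < ∑ k ∈ Icc q.1 q.2, xb k := by
    intro q hq1 hq2
    have hqD : q ∈ D := Finset.mem_filter.2 ⟨mem_univ _, hq1, hq2⟩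
    have hswap : ∑ k ∈ Icc q.1 q.2, xb k = ∑ i ∈ Q, w * ∑ k ∈ Icc q.1 q.2, gg i k := by
      rw [hxb]
      simp only [Finset.sum_apply, Pi.smul_apply, smul_eq_mul]
      rw [Finset.sum_comm]
      exact Finset.sum_congr rfl fun i _ => by rw [Finset.mul_sum]
    rw [hswap]
    have hform : (3:ℝ) ^ (Icc q.1 q.2).card = ∑ _i ∈ Q, w * (3:ℝ) ^ (Icc q.1 q.2).card := by
      rw [Finset.sum_const, hQcard, nsmul_eq_mul, hw]
      push_cast
      rw [show ((D.card : ℝ) + 1) * ((1:ℝ) / ((D.card : ℝ) + 1) * 3 ^ (Icc q.1 q.2).card)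
          = (((D.card : ℝ) + 1) * ((1:ℝ) / ((D.card : ℝ) + 1))) * 3 ^ (Icc q.1 q.2).card
        from by ring, hwsum D.card, one_mul]
    rw [hform]
    apply Finset.sum_lt_sum
    · intro i hi
      exact mul_le_mul_of_nonneg_left
        (((hFsub (hggF i hi)).1).2 q.1 q.2 hq1.1 hq1.2) (le_of_lt hw0)
    · refine ⟨some q, Finset.mem_insert_of_mem (Finset.mem_image_of_mem _ hqD), ?_⟩
      exact mul_lt_mul_of_pos_left (hgx q hqD) hw0
  refine ⟨ιF, hprop, hcomp, Set.Subset.antisymm hFsub ?_⟩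
  intro y hy
  obtain ⟨δ, hδ0, hz⟩ := perturb hn ιF xb (xb - y) (hFsub hxbF) hxbstrict
    (by
      simp only [Pi.sub_apply]
      rw [Finset.sum_sub_distrib, (hFsub hxbF).1.1, hy.1.1, sub_self])
    (by
      intro p hp
      simp only [Pi.sub_apply]
      rw [Finset.sum_sub_distrib, (hFsub hxbF).2 p hp, hy.2 p hp, sub_self])
  have hzA : xb + δ • (xb - y) ∈ KnPoly n := hz.1
  have hxbmax : ∀ y' ∈ KnPoly n, l y' ≤ l xb := by
    have h := hxbF
    rw [hl] at h
    exact h.2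
  have h1 : l (xb + δ • (xb - y)) ≤ l xb := hxbmax _ hzA
  have h2 : l (xb + δ • (xb - y)) = l xb + δ * (l xb - l y) := by
    rw [map_add, map_smul, map_sub]
    simp [smul_eq_mul]
  have h4 : δ * (l xb - l y) ≤ 0 := by linarith
  have h3 : l xb ≤ l y := by
    by_contra hc
    push_neg at hc
    nlinarith [mul_pos hδ0 (sub_pos.2 hc)]
  rw [hl]
  exact ⟨hy.1, fun y' hy' => le_trans (hxbmax y' hy') h3⟩

end Glue2

end KnAux

/-- for each set `ι` of pairwise compatible proper subintervals of `[1,n-1]`,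
the intersection of `K_n` with the hyperplanes `P_I`, `I ∈ ι`, is a nonempty face of `K_n`
of dimension `n - #ι - 2`, and every (nonempty, exposed) face of `K_n` arises this way;
consequently the face poset of `K_n` is isomorphic to the poset `I(n)`. -/
theorem KnPoly_faces (n : ℕ) (hn : 2 ≤ n) :
    (∀ ι : Finset (Fin (n - 1) × Fin (n - 1)),
      (∀ p ∈ ι, ProperInt n p) → (∀ p ∈ ι, ∀ q ∈ ι, CompatInt n p q) →
        (KnFace n ι).Nonempty ∧ IsExposed ℝ (KnPoly n) (KnFace n ι) ∧
          Module.finrank ℝ (vectorSpan ℝ (KnFace n ι)) + ι.card + 2 = n) ∧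
    (∀ F : Set (Fin (n - 1) → ℝ), IsExposed ℝ (KnPoly n) F → F.Nonempty →
      ∃ ι : Finset (Fin (n - 1) × Fin (n - 1)),
        (∀ p ∈ ι, ProperInt n p) ∧ (∀ p ∈ ι, ∀ q ∈ ι, CompatInt n p q) ∧
          F = KnFace n ι) := by
  exact ⟨fun ι hprop hcomp => KnAux.part1 hn ι hprop hcomp,
    fun F hF hne => KnAux.part2 hn F hF hne⟩
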